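/- Let V, W be ℂ-vector spaces, let M = (M₁,...,Mₛ) ∈ Hom(V,W)ˢ, and suppose the rank of M is at least r for some natural number r. Then there exists a finite-dimensional subspace U ⊆ V such that the tuple of restrictions (M₁|_U,...,Mₛ|_U) ∈ Hom(U,W)ˢ also has rank at least r. -/

import Mathlib

open Cardinal

-- helper A
lemma aux_rank_ge {A W : Type*} [AddCommGroup A] [Module ℂ A] [AddCommGroup W] [Module ℂ W]
    {r : ℕ} (f : A →ₗ[ℂ] W) (u : Fin r → A)
    (h : LinearIndependent ℂ (fun j => f (u j))) :
    (r : Cardinal) ≤ LinearMap.rank f := by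
  have h2 : LinearIndependent ℂ (fun j => f.rangeRestrict (u j)) :=
    LinearIndependent.of_comp (LinearMap.range f).subtype (by exact h)
  have := h2.cardinal_lift_le_rank
  simpa [LinearMap.rank] using this

-- helper B
lemma aux_exists_indep {V W : Type*} [AddCommGroup V] [Module ℂ V] [AddCommGroup W] [Module ℂ W]
    {r : ℕ} (f : V →ₗ[ℂ] W) (h : (r : Cardinal) ≤ LinearMap.rank f) :
    ∃ v : Fin r → V, LinearIndependent ℂ (fun j => f (v j)) := by
  obtain ⟨t, ht, hi⟩ := LinearMap.le_rank_iff_exists_linearIndependent_finset.mp h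
  have e : Fin r ≃ (t : Set V) := by
    refine Fintype.equivOfCardEq ?_
    simp [ht]
  exact ⟨fun j => (e j : V), hi.comp e e.injective⟩

-- helper C : dual family
lemma aux_dual {W : Type*} [AddCommGroup W] [Module ℂ W] {r : ℕ} (w : Fin r → W)
    (h : LinearIndependent ℂ w) :
    ∃ φ : Fin r → (W →ₗ[ℂ] ℂ), ∀ i j, φ i (w j) = if i = j then 1 else 0 := by
  classical
  let b := Module.Basis.span h
  choose φ hφ using fun i => LinearMap.exists_extend (b.coord i)
  refine ⟨φ, fun i j => ?_⟩
  have hb : ((b j : Submodule.span ℂ (Set.range w)) : W) = w j := congrArg Subtype.val (Module.Basis.span_apply h j)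
  have : φ i (w j) = b.coord i (b j) := by
    rw [← hφ i]
    simp [LinearMap.comp_apply, hb]
  rw [this, Module.Basis.coord_apply, b.repr_self]
  simp [Finsupp.single_apply, eq_comm]

-- helper D : det nonzero implies independent
lemma aux_indep_of_det {W : Type*} [AddCommGroup W] [Module ℂ W] {r : ℕ} (w : Fin r → W)
    (φ : Fin r → (W →ₗ[ℂ] ℂ))
    (h : Matrix.det (Matrix.of fun i j => φ i (w j)) ≠ 0) :
    LinearIndependent ℂ w := by
  set A : Matrix (Fin r) (Fin r) ℂ := Matrix.of fun i j => φ i (w j)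
  have hA : IsUnit A := (Matrix.isUnit_iff_isUnit_det A).mpr (isUnit_iff_ne_zero.mpr h)
  have hcols : LinearIndependent ℂ (fun j => A.transpose j) :=
    Matrix.linearIndependent_cols_iff_isUnit.mpr hA
  have hΦ : LinearIndependent ℂ (fun j => (LinearMap.pi φ) (w j)) := by
    convert hcols using 2 with j
    try ext i
    try simp [A, Matrix.transpose_apply]
  exact LinearIndependent.of_comp (LinearMap.pi φ) hΦ

open MvPolynomial in
noncomputable def detPoly {V W : Type*} [AddCommGroup V] [Module ℂ V]
    [AddCommGroup W] [Module ℂ W] {s : ℕ} (M : Fin s → (V →ₗ[ℂ] W)) (r : ℕ)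
    (v : Fin r → V) (φ : Fin r → (W →ₗ[ℂ] ℂ)) : MvPolynomial (Fin s) ℂ :=
  Matrix.det (Matrix.of fun i j => ∑ k, X k * C (φ i (M k (v j))))

lemma eval_detPoly {V W : Type*} [AddCommGroup V] [Module ℂ V]
    [AddCommGroup W] [Module ℂ W] {s : ℕ} (M : Fin s → (V →ₗ[ℂ] W)) (r : ℕ)
    (v : Fin r → V) (φ : Fin r → (W →ₗ[ℂ] ℂ)) (lam : Fin s → ℂ) :
    MvPolynomial.eval lam (detPoly M r v φ) =
      Matrix.det (Matrix.of fun i j => φ i ((∑ k, lam k • M k) (v j))) := by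
  rw [detPoly, RingHom.map_det]
  congr 1
  ext i j
  simp [Matrix.map_apply, LinearMap.sum_apply, LinearMap.smul_apply, map_sum, map_smul,
    smul_eq_mul]

/-- If a tuple of linear maps `M : Hom(V,W)ˢ` has rank at least `r` (every
nonzero linear combination has rank at least `r`), then there is a
finite-dimensional subspace `U ⊆ V` such that the tuple of restrictions to `U`
still has rank at least `r`. -/
theorem exists_finiteDimensional_restriction_rank_ge {V W : Type*}
    [AddCommGroup V] [Module ℂ V] [AddCommGroup W] [Module ℂ W] {s : ℕ}
    (M : Fin s → (V →ₗ[ℂ] W)) (r : ℕ)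
    (hM : ∀ lam : Fin s → ℂ, lam ≠ 0 →
      (r : Cardinal) ≤ LinearMap.rank (∑ i, lam i • M i)) :
    ∃ U : Submodule ℂ V, FiniteDimensional ℂ U ∧
      ∀ lam : Fin s → ℂ, lam ≠ 0 →
        (r : Cardinal) ≤ LinearMap.rank (∑ i, lam i • (M i ∘ₗ U.subtype)) := by
  classical
  let S : Submodule ℂ V → Set (MvPolynomial (Fin s) ℂ) := fun U =>
    { p | ∃ v : Fin r → V, ∃ φ : Fin r → (W →ₗ[ℂ] ℂ),
        (∀ j, v j ∈ U) ∧ p = detPoly M r v φ }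
  let I : Submodule ℂ V → Ideal (MvPolynomial (Fin s) ℂ) := fun U => Ideal.span (S U)
  have Imono : ∀ {U U' : Submodule ℂ V}, U ≤ U' → I U ≤ I U' := by
    intro U U' h
    refine Ideal.span_mono ?_
    rintro p ⟨v, φ, hv, hp⟩
    exact ⟨v, φ, fun j => h (hv j), hp⟩
  have hNoeth : IsNoetherian (MvPolynomial (Fin s) ℂ) (MvPolynomial (Fin s) ℂ) :=
    inferInstance
  obtain ⟨J, ⟨U₀, hU₀, rfl⟩, hmax⟩ := set_has_maximal_iff_noetherian.mpr hNoeth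
      { J | ∃ U : Submodule ℂ V, FiniteDimensional ℂ U ∧ J = I U }
      ⟨I ⊥, ⊥, inferInstance, rfl⟩
  have hle : ∀ U : Submodule ℂ V, FiniteDimensional ℂ U → I U ≤ I U₀ := by
    intro U hU
    have h1 : I U₀ ≤ I (U ⊔ U₀) := Imono le_sup_right
    have h2 : ¬ I U₀ < I (U ⊔ U₀) := hmax _ ⟨U ⊔ U₀, inferInstance, rfl⟩
    have h3 : I (U ⊔ U₀) = I U₀ := by
      rcases h1.lt_or_eq with h | h
      · exact absurd h h2
      · exact h.symm
    exact h3 ▸ Imono le_sup_left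
  refine ⟨U₀, hU₀, ?_⟩
  intro lam hlam
  obtain ⟨v, hv⟩ := aux_exists_indep _ (hM lam hlam)
  obtain ⟨φ, hφ⟩ := aux_dual _ hv
  have hval : MvPolynomial.eval lam (detPoly M r v φ) = 1 := by
    rw [eval_detPoly]
    have h1 : (Matrix.of fun i j => φ i ((∑ k, lam k • M k) (v j)))
        = (1 : Matrix (Fin r) (Fin r) ℂ) := by
      ext i j
      simp only [Matrix.of_apply, Matrix.one_apply]
      exact hφ i j
    rw [h1, Matrix.det_one]
  have hmem : detPoly M r v φ ∈ I U₀ := by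
    have hfin : FiniteDimensional ℂ (Submodule.span ℂ (Set.range v)) :=
      FiniteDimensional.span_of_finite _ (Set.finite_range v)
    exact hle _ hfin (Ideal.subset_span
      ⟨v, φ, fun j => Submodule.subset_span ⟨j, rfl⟩, rfl⟩)
  have hexists : ∃ v' : Fin r → V, ∃ φ' : Fin r → (W →ₗ[ℂ] ℂ),
      (∀ j, v' j ∈ U₀) ∧ MvPolynomial.eval lam (detPoly M r v' φ') ≠ 0 := by
    by_contra hcon
    push_neg at hcon
    have hker : I U₀ ≤ RingHom.ker (MvPolynomial.eval lam) := by
      rw [Ideal.span_le]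
      rintro p ⟨v', φ', hv', rfl⟩
      exact RingHom.mem_ker.mpr (hcon v' φ' hv')
    have h0 := hker hmem
    rw [RingHom.mem_ker, hval] at h0
    exact one_ne_zero h0
  obtain ⟨v', φ', hv', hne⟩ := hexists
  rw [eval_detPoly] at hne
  let u : Fin r → U₀ := fun j => ⟨v' j, hv' j⟩
  set g := ∑ i, lam i • (M i ∘ₗ U₀.subtype) with hg
  have hdet : Matrix.det (Matrix.of fun i j => φ' i (g (u j))) ≠ 0 := by
    convert hne using 3
    ext i j
    simp [g, u, LinearMap.sum_apply]
  exact aux_rank_ge g u (aux_indep_of_det _ _ hdet)
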